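/- arXiv:2006.01570 — 3 statements merged into one kernel-verified Lean document; each statement's English description precedes it below -/
import Mathlib

section
/- Let N be a finite set and, for each j ∈ N, let w_j ∈ ℝ, r_j ∈ ℝ, θ_j ∈ ℝ, φ_j ∈ ℝ, ψ_j ∈ ℝ and x_j ∈ ℂ. Let R : ℝ → ℝ, β ∈ ℝ, M ∈ ℤ, m ∈ ℤ, and φ ∈ ℝ. Then Σ_{j∈N} w_j · R(r_j) · exp(I·(m·(θ_j + φ) + β)) · exp(I·M·(φ_j + φ − ψ_j)) · (exp(I·M·ψ_j) · x_j) = exp(I·(M + m)·φ) · Σ_{j∈N} w_j · R(r_j) · exp(I·(m·θ_j + β)) · exp(I·M·φ_j) · x_j. (Lemma 1 in full: under simultaneous arbitrary rotations of coordinate systems at the center vertex and at every neighbor, the discrete HSN convolution output transforms exactly as a feature of rotation order M + m in the rotated coordinate system at the center.) -/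
open Complex Finset

/-- Lemma 1 in full: under simultaneous arbitrary rotations of coordinate systems at
the center vertex and at every neighbor, the discrete HSN convolution output transforms
exactly as a feature of rotation order `M + m` in the rotated coordinate system at the
center. -/
theorem hsn_conv_full_rotation {ι : Type*} (N : Finset ι)
    (w r θ φv ψ : ι → ℝ) (x : ι → ℂ) (R : ℝ → ℝ) (β : ℝ) (M m : ℤ) (φ : ℝ) :
    ∑ j ∈ N, (w j : ℂ) * (R (r j) : ℂ) *
        Complex.exp (Complex.I * ((m : ℂ) * ((θ j : ℂ) + (φ : ℂ)) + (β : ℂ))) *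
        Complex.exp (Complex.I * (M : ℂ) * ((φv j : ℂ) + (φ : ℂ) - (ψ j : ℂ))) *
        (Complex.exp (Complex.I * (M : ℂ) * (ψ j : ℂ)) * x j)
      = Complex.exp (Complex.I * ((M : ℂ) + (m : ℂ)) * (φ : ℂ)) *
        ∑ j ∈ N, (w j : ℂ) * (R (r j) : ℂ) *
          Complex.exp (Complex.I * ((m : ℂ) * (θ j : ℂ) + (β : ℂ))) *
          Complex.exp (Complex.I * (M : ℂ) * (φv j : ℂ)) * x j := by
  rw [Finset.mul_sum]
  apply Finset.sum_congr rfl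
  ring_nf
  simp only [Complex.exp_add, Complex.exp_sub]
  ring_nf
  intro j _
  field_simp
end

section
/- Let R : ℝ → ℝ be measurable, β ∈ ℝ, m ∈ ℤ, ε > 0, φ ∈ ℝ, and let x : ℝ × ℝ → ℂ be measurable such that x(r, θ + 2π) = x(r, θ) for all r, θ (2π-periodicity in the angular variable) and such that (r, θ) ↦ R(r) · exp(I·(m·θ + β)) · x(r, θ) · r is integrable on [0, ε] × [0, 2π]. Then ∫_{0}^{ε} ∫_{0}^{2π} R(r) · exp(I·(m·θ + β)) · x(r, θ − φ) · r dθ dr = exp(I·m·φ) · ∫_{0}^{ε} ∫_{0}^{2π} R(r) · exp(I·(m·θ + β)) · x(r, θ) · r dθ dr. (Rotation-equivariance of the circular-harmonic cross-correlation: rotating the domain of the input by φ multiplies the output by exp(I·m·φ).) -/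
open Complex MeasureTheory

/-- Rotation-equivariance of the circular-harmonic cross-correlation: rotating the
domain of the input by `φ` multiplies the output by `exp (I * m * φ)`. -/
theorem circular_harmonic_correlation_rotation_equivariant
    (R : ℝ → ℝ) (hR : Measurable R) (β : ℝ) (m : ℤ) (ε : ℝ) (hε : 0 < ε) (φ : ℝ)
    (x : ℝ × ℝ → ℂ) (hx : Measurable x)
    (hper : ∀ r θ : ℝ, x (r, θ + 2 * Real.pi) = x (r, θ))
    (hint : IntegrableOn
      (fun p : ℝ × ℝ => (R p.1 : ℂ) *
        Complex.exp (Complex.I * ((m : ℂ) * (p.2 : ℂ) + (β : ℂ))) * x p * (p.1 : ℂ))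
      (Set.Icc 0 ε ×ˢ Set.Icc 0 (2 * Real.pi))) :
    (∫ r in (0 : ℝ)..ε, ∫ θ in (0 : ℝ)..(2 * Real.pi),
        (R r : ℂ) * Complex.exp (Complex.I * ((m : ℂ) * (θ : ℂ) + (β : ℂ))) *
          x (r, θ - φ) * (r : ℂ))
      = Complex.exp (Complex.I * (m : ℂ) * (φ : ℂ)) *
        ∫ r in (0 : ℝ)..ε, ∫ θ in (0 : ℝ)..(2 * Real.pi),
          (R r : ℂ) * Complex.exp (Complex.I * ((m : ℂ) * (θ : ℂ) + (β : ℂ))) *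
            x (r, θ) * (r : ℂ) := by
  have key : ∀ r : ℝ,
      (∫ θ in (0 : ℝ)..(2 * Real.pi),
        (R r : ℂ) * Complex.exp (Complex.I * ((m : ℂ) * (θ : ℂ) + (β : ℂ))) *
          x (r, θ - φ) * (r : ℂ))
      = Complex.exp (Complex.I * (m : ℂ) * (φ : ℂ)) *
        ∫ θ in (0 : ℝ)..(2 * Real.pi),
          (R r : ℂ) * Complex.exp (Complex.I * ((m : ℂ) * (θ : ℂ) + (β : ℂ))) *
            x (r, θ) * (r : ℂ) := by
    intro r
    set h : ℝ → ℂ := fun u =>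
      (R r : ℂ) * Complex.exp (Complex.I * ((m : ℂ) * (u : ℂ) + (β : ℂ))) * x (r, u) * (r : ℂ)
      with hh
    have hhper : Function.Periodic h (2 * Real.pi) := by
      intro u
      simp only [hh, hper]
      congr 2
      push_cast
      rw [show Complex.I * ((m:ℂ) * ((u:ℂ) + 2*Real.pi) + β)
          = (m:ℂ) * (2*Real.pi*Complex.I) + Complex.I * ((m:ℂ)*(u:ℂ) + β) by ring,
        Complex.exp_add, Complex.exp_int_mul_two_pi_mul_I, one_mul]
    have step1 : (∫ θ in (0 : ℝ)..(2 * Real.pi),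
        (R r : ℂ) * Complex.exp (Complex.I * ((m : ℂ) * (θ : ℂ) + (β : ℂ))) *
          x (r, θ - φ) * (r : ℂ))
        = ∫ θ in (0 : ℝ)..(2 * Real.pi),
            Complex.exp (Complex.I * (m : ℂ) * (φ : ℂ)) * h (θ - φ) := by
      apply intervalIntegral.integral_congr
      intro θ _
      simp only [hh]
      push_cast
      rw [show Complex.I * ((m:ℂ) * (θ:ℂ) + β)
          = Complex.I * (m:ℂ) * (φ:ℂ) + Complex.I * ((m:ℂ)*((θ:ℂ)-(φ:ℂ)) + β) by ring,
        Complex.exp_add]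
      ring
    rw [step1]
    rw [intervalIntegral.integral_const_mul]
    congr 1
    rw [intervalIntegral.integral_comp_sub_right (a := 0) (b := 2*Real.pi) h φ]
    have h2 : (0 : ℝ) - φ + 2 * Real.pi = 2 * Real.pi - φ := by ring
    have := hhper.intervalIntegral_add_eq ((0:ℝ) - φ) 0
    rw [h2] at this
    simpa using this
  calc (∫ r in (0 : ℝ)..ε, ∫ θ in (0 : ℝ)..(2 * Real.pi),
        (R r : ℂ) * Complex.exp (Complex.I * ((m : ℂ) * (θ : ℂ) + (β : ℂ))) *
          x (r, θ - φ) * (r : ℂ))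
      = ∫ r in (0 : ℝ)..ε, Complex.exp (Complex.I * (m : ℂ) * (φ : ℂ)) *
          ∫ θ in (0 : ℝ)..(2 * Real.pi),
            (R r : ℂ) * Complex.exp (Complex.I * ((m : ℂ) * (θ : ℂ) + (β : ℂ))) *
              x (r, θ) * (r : ℂ) := by
        exact intervalIntegral.integral_congr fun r _ => key r
    _ = _ := intervalIntegral.integral_const_mul _ _
end

section
/- Let m ∈ ℤ and let K : ℂ → ℂ be a measurable function satisfying K(exp(I·α) · v) = exp(I·m·α) · K(v) for all α ∈ ℝ and v ∈ ℂ (circular-harmonic steerability of order m). Let x : ℂ → ℂ be measurable, let φ ∈ ℝ, and let p ∈ ℂ be such that v ↦ K(v) · x(p + v) is integrable on ℂ (identified with ℝ² with Lebesgue measure) and v ↦ K(v) · x(exp(−I·φ) · (exp(I·φ)·p + v)) is integrable. Then ∫_{ℂ} K(v) · x(exp(−I·φ) · (exp(I·φ)·p + v)) dv = exp(I·m·φ) · ∫_{ℂ} K(v) · x(p + v) dv; that is, writing (K ⋆ x)(q) = ∫_{ℂ} K(v) · x(q + v) dv, the cross-correlation satisfies (K ⋆ (x ∘ ρ_{−φ}))(ρ_φ(p))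 = exp(I·m·φ) · (K ⋆ x)(p), where ρ_α(z) = exp(I·α)·z is rotation of the plane by α. -/
open Complex MeasureTheory

/-- Rotation-equivariance of cross-correlation with a circular-harmonic kernel of
order `m` on the plane `ℂ ≅ ℝ²` with Lebesgue measure:
`(K ⋆ (x ∘ ρ_{-φ})) (ρ_φ p) = exp (I m φ) * (K ⋆ x) p`. -/
theorem circular_harmonic_kernel_correlation_rotation_equivariant
    (m : ℤ) (K : ℂ → ℂ) (hKmeas : Measurable K)
    (hK : ∀ (α : ℝ) (v : ℂ),
      K (Complex.exp (Complex.I * (α : ℂ)) * v) =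
        Complex.exp (Complex.I * (m : ℂ) * (α : ℂ)) * K v)
    (x : ℂ → ℂ) (hx : Measurable x) (φ : ℝ) (p : ℂ)
    (h1 : Integrable (fun v : ℂ => K v * x (p + v)))
    (h2 : Integrable (fun v : ℂ =>
      K v * x (Complex.exp (-(Complex.I * (φ : ℂ))) *
        (Complex.exp (Complex.I * (φ : ℂ)) * p + v)))) :
    (∫ v : ℂ, K v * x (Complex.exp (-(Complex.I * (φ : ℂ))) *
        (Complex.exp (Complex.I * (φ : ℂ)) * p + v)))
      = Complex.exp (Complex.I * (m : ℂ) * (φ : ℂ)) * ∫ v : ℂ, K v * x (p + v) := by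
  set c : Circle := Circle.exp φ with hc
  have hcc : (c : ℂ) = Complex.exp (Complex.I * (φ : ℂ)) := by
    rw [Circle.coe_exp]; ring_nf
  have hmp : MeasurePreserving (fun w : ℂ => (rotation c) w) volume volume :=
    (rotation c).measurePreserving
  have hemb : MeasurableEmbedding (fun w : ℂ => (rotation c) w) :=
    (rotation c).toHomeomorph.measurableEmbedding
  have key := hmp.integral_comp hemb
    (fun v => K v * x (Complex.exp (-(Complex.I * (φ : ℂ))) *
        (Complex.exp (Complex.I * (φ : ℂ)) * p + v)))
  rw [← key]
  have hne : Complex.exp (Complex.I * (φ : ℂ)) ≠ 0 := Complex.exp_ne_zero _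
  have : ∀ w : ℂ, K ((rotation c) w) *
      x (Complex.exp (-(Complex.I * (φ : ℂ))) *
        (Complex.exp (Complex.I * (φ : ℂ)) * p + (rotation c) w))
      = Complex.exp (Complex.I * (m : ℂ) * (φ : ℂ)) * (K w * x (p + w)) := by
    intro w
    have hr : (rotation c) w = Complex.exp (Complex.I * (φ : ℂ)) * w := by
      rw [rotation_apply, hcc]
    rw [hr, hK φ w, Complex.exp_neg, mul_add, ← mul_assoc,
      inv_mul_cancel₀ hne, one_mul, ← mul_assoc, inv_mul_cancel₀ hne, one_mul]
    ring
  simp_rw [this]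
  exact integral_const_mul _ _
end
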